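/- In the category Graph of directed multigraphs there exist rules ρ₁ = ⟨p₁, ac_(L₁)⟩ and ρ₂ = ⟨p₂, ac_(L₂)⟩ whose plain rules consist of finite graphs and whose ACs are built from finitely many morphisms between finite graphs, such that no finite set S of transformation pairs for ⟨ρ₁, ρ₂⟩ in which all occurring graphs are finite is complete with respect to parallel dependence, i.e. such that every parallel dependent transformation pair via ⟨ρ₁, ρ₂⟩ admits an embedding of some member of S via an extension morphism and extension diagrams. -/

import Mathlib

open CategoryTheory CategoryTheory.Limits

universe v u

variable {C : Type u} [Category.{v} C]

/-- A plain rule: a span `L ⟵l I ⟶r R` with `l` and `r` monomorphisms. -/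
structure PlainRule (C : Type u) [Category.{v} C] : Type (max u v) where
  L : C
  I : C
  R : C
  l : I ⟶ L
  r : I ⟶ R
  mono_l : Mono l
  mono_r : Mono r

/-- An AC-disregarding direct transformation `G ⇒_(p,m) H`: a double pushout with
context `D`, match `m` and comatch `cm`. -/
structure Trafo (p : PlainRule C) (G H : C) : Type (max u v) where
  m : p.L ⟶ G
  D : C
  f : p.I ⟶ D
  k : D ⟶ G
  c : D ⟶ H
  cm : p.R ⟶ H
  po1 : IsPushout p.l f m k
  po2 : IsPushout p.r f cm c

/-- A pair of AC-disregarding transformations `H₁ ⇐_(p₁,m₁) G ⇒_(p₂,m₂) H₂`. -/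
structure TrafoPair (p₁ p₂ : PlainRule C) : Type (max u v) where
  H₁ : C
  G : C
  H₂ : C
  t₁ : Trafo p₁ G H₁
  t₂ : Trafo p₂ G H₂

/-- An extension diagram embedding `t'` into `t` via extension morphism `ext`. -/
structure TrafoEmbedding {p : PlainRule C} {G' H' G H : C}
    (t' : Trafo p G' H') (t : Trafo p G H) (ext : G' ⟶ G) : Type (max u v) where
  d : t'.D ⟶ t.D
  h : H' ⟶ H
  match_eq : t'.m ≫ ext = t.m
  f_eq : t'.f ≫ d = t.f
  po1 : IsPushout t'.k d ext t.k
  po2 : IsPushout t'.c d h t.c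

/-- A transformation pair embedded into another via a common extension morphism. -/
structure PairEmbedding {p₁ p₂ : PlainRule C} (tp' tp : TrafoPair p₁ p₂)
    (ext : tp'.G ⟶ tp.G) : Type (max u v) where
  e₁ : TrafoEmbedding tp'.t₁ tp.t₁ ext
  e₂ : TrafoEmbedding tp'.t₂ tp.t₂ ext

/-- Parallel independence of a plain transformation pair. -/
def TrafoPair.ParallelIndep {p₁ p₂ : PlainRule C} (tp : TrafoPair p₁ p₂) : Prop :=
  (∃ d₁₂ : p₁.L ⟶ tp.t₂.D, d₁₂ ≫ tp.t₂.k = tp.t₁.m) ∧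
  (∃ d₂₁ : p₂.L ⟶ tp.t₁.D, d₂₁ ≫ tp.t₁.k = tp.t₂.m)

/-- Use-delete conflict: no commuting morphism `d₁₂ : L₁ ⟶ D₂` exists. -/
def TrafoPair.UseDelete {p₁ p₂ : PlainRule C} (tp : TrafoPair p₁ p₂) : Prop :=
  ¬ ∃ d₁₂ : p₁.L ⟶ tp.t₂.D, d₁₂ ≫ tp.t₂.k = tp.t₁.m

/-- Delete-use conflict: no commuting morphism `d₂₁ : L₂ ⟶ D₁` exists. -/
def TrafoPair.DeleteUse {p₁ p₂ : PlainRule C} (tp : TrafoPair p₁ p₂) : Prop :=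
  ¬ ∃ d₂₁ : p₂.L ⟶ tp.t₁.D, d₂₁ ≫ tp.t₁.k = tp.t₂.m

/-- A transformation pair is in conflict (parallel dependent) if it is not
parallel independent. -/
def TrafoPair.InConflict {p₁ p₂ : PlainRule C} (tp : TrafoPair p₁ p₂) : Prop :=
  ¬ tp.ParallelIndep

/-- `tpI` is an initial transformation pair for `tp`. -/
def IsInitialTrafoPairFor {p₁ p₂ : PlainRule C} (tpI tp : TrafoPair p₁ p₂) : Prop :=
  ∃ fI : tpI.G ⟶ tp.G, Nonempty (PairEmbedding tpI tp fI) ∧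
    ∀ (tp' : TrafoPair p₁ p₂) (f : tp'.G ⟶ tp.G), PairEmbedding tp' tp f →
      ∃! g : tpI.G ⟶ tp'.G, Nonempty (PairEmbedding tpI tp' g) ∧ g ≫ f = fI

/-- Two transformation pairs are isomorphic if each is embedded into the other via
an isomorphism as extension morphism. -/
def PairIso {p₁ p₂ : PlainRule C} (tp tp' : TrafoPair p₁ p₂) : Prop :=
  (∃ e : tp.G ⟶ tp'.G, IsIso e ∧ Nonempty (PairEmbedding tp tp' e)) ∧
  (∃ e' : tp'.G ⟶ tp.G, IsIso e' ∧ Nonempty (PairEmbedding tp' tp e'))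

section Coproducts

variable [HasBinaryCoproducts C]

lemma isPushout_coprod_left {A B X : C} (g : A ⟶ B) :
    IsPushout g (coprod.inl : A ⟶ A ⨿ X) (coprod.inl : B ⟶ B ⨿ X)
      (coprod.map g (𝟙 X)) := by
  have w : CommSq g (coprod.inl : A ⟶ A ⨿ X) (coprod.inl : B ⟶ B ⨿ X)
      (coprod.map g (𝟙 X)) := ⟨by simp⟩
  refine IsPushout.of_isColimit' w ?_
  exact PushoutCocone.IsColimit.mk w.w
    (fun s => coprod.desc s.inl (coprod.inr ≫ s.inr))
    (fun s => coprod.inl_desc _ _)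
    (fun s => by
      apply coprod.hom_ext
      · rw [coprod.inl_map_assoc]; erw [coprod.inl_desc]; exact s.condition
      · rw [coprod.inr_map_assoc, Category.id_comp]; erw [coprod.inr_desc])
    (fun s mm h1 h2 => by
      apply coprod.hom_ext
      · rw [h1]; exact (coprod.inl_desc _ _).symm
      · have := coprod.inr ≫= h2
        rw [coprod.inr_map_assoc, Category.id_comp] at this
        rw [this]; exact (coprod.inr_desc _ _).symm)

lemma isPushout_coprod_right {A B X : C} (g : A ⟶ B) :
    IsPushout g (coprod.inr : A ⟶ X ⨿ A) (coprod.inr : B ⟶ X ⨿ B)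
      (coprod.map (𝟙 X) g) := by
  have w : CommSq g (coprod.inr : A ⟶ X ⨿ A) (coprod.inr : B ⟶ X ⨿ B)
      (coprod.map (𝟙 X) g) := ⟨by simp⟩
  refine IsPushout.of_isColimit' w ?_
  exact PushoutCocone.IsColimit.mk w.w
    (fun s => coprod.desc (coprod.inl ≫ s.inr) s.inl)
    (fun s => coprod.inr_desc _ _)
    (fun s => by
      apply coprod.hom_ext
      · rw [coprod.inl_map_assoc, Category.id_comp]; erw [coprod.inl_desc]
      · rw [coprod.inr_map_assoc]; erw [coprod.inr_desc]; exact s.condition)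
    (fun s mm h1 h2 => by
      apply coprod.hom_ext
      · have := coprod.inl ≫= h2
        rw [coprod.inl_map_assoc, Category.id_comp] at this
        rw [this]; exact (coprod.inl_desc _ _).symm
      · rw [h1]; exact (coprod.inr_desc _ _).symm)

/-- The transformation applying `p` at the coproduct injection `inl : L ⟶ L ⨿ X`. -/
noncomputable def coprodTrafoL (p : PlainRule C) (X : C) : Trafo p (p.L ⨿ X) (p.R ⨿ X) where
  m := coprod.inl
  D := p.I ⨿ X
  f := coprod.inl
  k := coprod.map p.l (𝟙 X)
  c := coprod.map p.r (𝟙 X)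
  cm := coprod.inl
  po1 := isPushout_coprod_left p.l
  po2 := isPushout_coprod_left p.r

/-- The transformation applying `p` at the coproduct injection `inr : L ⟶ X ⨿ L`. -/
noncomputable def coprodTrafoR (p : PlainRule C) (X : C) : Trafo p (X ⨿ p.L) (X ⨿ p.R) where
  m := coprod.inr
  D := X ⨿ p.I
  f := coprod.inr
  k := coprod.map (𝟙 X) p.l
  c := coprod.map (𝟙 X) p.r
  cm := coprod.inr
  po1 := isPushout_coprod_right p.l
  po2 := isPushout_coprod_right p.r

/-- The transformation pair `tp_(L₁+L₂) : R₁+L₂ ⇐_(p₁,i₁) L₁+L₂ ⇒_(p₂,i₂) L₁+R₂`. -/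
noncomputable def coprodPair (p₁ p₂ : PlainRule C) : TrafoPair p₁ p₂ where
  H₁ := p₁.R ⨿ p₂.L
  G := p₁.L ⨿ p₂.L
  H₂ := p₁.L ⨿ p₂.R
  t₁ := coprodTrafoL p₁ p₂.L
  t₂ := coprodTrafoR p₂ p₁.L

end Coproducts

/-! ## The category `MGraph` of directed multigraphs -/

/-- A directed multigraph: vertices, edges, and source/target maps. -/
structure MGraph : Type 1 where
  V : Type
  E : Type
  s : E → V
  t : E → V

/-- A morphism of directed multigraphs. -/
@[ext]
structure MGraphHom (G H : MGraph) where
  onV : G.V → H.V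
  onE : G.E → H.E
  comm_s : ∀ e, H.s (onE e) = onV (G.s e)
  comm_t : ∀ e, H.t (onE e) = onV (G.t e)

instance : Category MGraph where
  Hom := MGraphHom
  id G := ⟨fun v => v, fun e => e, fun _ => rfl, fun _ => rfl⟩
  comp f g := ⟨fun v => g.onV (f.onV v), fun e => g.onE (f.onE e),
    fun e => by rw [g.comm_s, f.comm_s], fun e => by rw [g.comm_t, f.comm_t]⟩

lemma MGraph.hom_ext' {G H : MGraph} {f g : G ⟶ H}
    (h1 : MGraphHom.onV f = MGraphHom.onV g) (h2 : MGraphHom.onE f = MGraphHom.onE g) :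
    f = g := MGraphHom.ext h1 h2

/-- A multigraph is finite if its vertex and edge types are finite. -/
def MGraph.Fin (G : MGraph) : Prop := Finite G.V ∧ Finite G.E

/-- The class `M` of injective multigraph morphisms. -/
def InjHom {G H : MGraph} (f : G ⟶ H) : Prop :=
  Function.Injective (MGraphHom.onV f) ∧ Function.Injective (MGraphHom.onE f)

/-- A pair of morphisms with common codomain is jointly surjective. -/
def JointlySurj {A B K : MGraph} (f : A ⟶ K) (g : B ⟶ K) : Prop :=
  (∀ v : K.V, (∃ a, MGraphHom.onV f a = v) ∨ (∃ b, MGraphHom.onV g b = v)) ∧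
  (∀ e : K.E, (∃ a, MGraphHom.onE f a = e) ∨ (∃ b, MGraphHom.onE g b = e))

/-! ### Binary coproducts of multigraphs -/

/-- Disjoint union of multigraphs. -/
def MGraph.sum (G H : MGraph) : MGraph where
  V := G.V ⊕ H.V
  E := G.E ⊕ H.E
  s := Sum.elim (fun e => Sum.inl (G.s e)) (fun e => Sum.inr (H.s e))
  t := Sum.elim (fun e => Sum.inl (G.t e)) (fun e => Sum.inr (H.t e))

def MGraph.inl' (G H : MGraph) : G ⟶ G.sum H :=
  ⟨Sum.inl, Sum.inl, fun _ => rfl, fun _ => rfl⟩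

def MGraph.inr' (G H : MGraph) : H ⟶ G.sum H :=
  ⟨Sum.inr, Sum.inr, fun _ => rfl, fun _ => rfl⟩

def MGraph.desc' {G H K : MGraph} (f : G ⟶ K) (g : H ⟶ K) : G.sum H ⟶ K where
  onV := Sum.elim (MGraphHom.onV f) (MGraphHom.onV g)
  onE := Sum.elim (MGraphHom.onE f) (MGraphHom.onE g)
  comm_s := by rintro (e | e) <;> simp [MGraph.sum, MGraphHom.comm_s]
  comm_t := by rintro (e | e) <;> simp [MGraph.sum, MGraphHom.comm_t]

lemma MGraph.inl'_desc' {G H K : MGraph} (f : G ⟶ K) (g : H ⟶ K) :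
    MGraph.inl' G H ≫ MGraph.desc' f g = f := by
  apply MGraph.hom_ext' <;> rfl

lemma MGraph.inr'_desc' {G H K : MGraph} (f : G ⟶ K) (g : H ⟶ K) :
    MGraph.inr' G H ≫ MGraph.desc' f g = g := by
  apply MGraph.hom_ext' <;> rfl

lemma MGraph.sum_hom_ext {G H K : MGraph} {f g : G.sum H ⟶ K}
    (h1 : MGraph.inl' G H ≫ f = MGraph.inl' G H ≫ g)
    (h2 : MGraph.inr' G H ≫ f = MGraph.inr' G H ≫ g) : f = g := by
  apply MGraph.hom_ext'
  · funext v
    rcases v with v | v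
    · exact congrFun (congrArg MGraphHom.onV h1) v
    · exact congrFun (congrArg MGraphHom.onV h2) v
  · funext e
    rcases e with e | e
    · exact congrFun (congrArg MGraphHom.onE h1) e
    · exact congrFun (congrArg MGraphHom.onE h2) e

def MGraph.sumCofanIsColimit (G H : MGraph) :
    IsColimit (BinaryCofan.mk (MGraph.inl' G H) (MGraph.inr' G H)) :=
  BinaryCofan.isColimitMk
    (fun s => MGraph.desc' s.inl s.inr)
    (fun s => MGraph.inl'_desc' _ _)
    (fun s => MGraph.inr'_desc' _ _)
    (fun s mm h1 h2 => by
      apply MGraph.sum_hom_ext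
      · rw [h1]; exact (MGraph.inl'_desc' _ _).symm
      · rw [h2]; exact (MGraph.inr'_desc' _ _).symm)

instance (G H : MGraph) : HasColimit (pair G H) :=
  HasColimit.mk ⟨_, MGraph.sumCofanIsColimit G H⟩

instance : HasBinaryCoproducts MGraph := hasBinaryCoproducts_of_hasColimit_pair MGraph

/-! ### Nested application conditions -/

/-- Nested application conditions over a multigraph. -/
inductive AC : MGraph → Type 1 where
  | tru : (P : MGraph) → AC P
  | ex : {P Q : MGraph} → (P ⟶ Q) → AC Q → AC P
  | neg : {P : MGraph} → AC P → AC P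
  | conj : {P : MGraph} → AC P → AC P → AC P

/-- Satisfaction of an application condition by a morphism, where the extension
morphism `q` is required to be in the class `M` of injective morphisms. -/
def AC.Sat : {P G : MGraph} → (P ⟶ G) → AC P → Prop
  | _, _, _, AC.tru _ => True
  | _, G, p, AC.ex a c => ∃ q : _ ⟶ G, InjHom q ∧ a ≫ q = p ∧ AC.Sat q c
  | _, _, p, AC.neg c => ¬ AC.Sat p c
  | _, _, p, AC.conj c₁ c₂ => AC.Sat p c₁ ∧ AC.Sat p c₂

/-- All constituent graphs of an application condition are finite. -/
def AC.FinGraphs : {P : MGraph} → AC P → Prop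
  | _, AC.tru _ => True
  | _, AC.ex (Q := Q) _ c => Q.Fin ∧ AC.FinGraphs c
  | _, AC.neg c => AC.FinGraphs c
  | _, AC.conj c₁ c₂ => AC.FinGraphs c₁ ∧ AC.FinGraphs c₂

/-- Equivalence of ACs: exactly the same morphisms satisfy them. -/
def AC.Equiv {P : MGraph} (c c' : AC P) : Prop :=
  ∀ {G : MGraph} (p : P ⟶ G), AC.Sat p c ↔ AC.Sat p c'

/-- A rule with application condition. -/
structure Rule : Type 1 where
  p : PlainRule MGraph
  ac : AC p.L

/-- A rule is finite if its rule graphs and the constituent graphs of its AC are. -/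
def RuleFin (ρ : Rule) : Prop :=
  ρ.p.L.Fin ∧ ρ.p.I.Fin ∧ ρ.p.R.Fin ∧ AC.FinGraphs ρ.ac

/-- A transformation pair via rules with ACs: the matches satisfy the rule ACs. -/
structure RTrafoPair (ρ₁ ρ₂ : Rule) : Type 1 where
  tp : TrafoPair ρ₁.p ρ₂.p
  sat₁ : AC.Sat tp.t₁.m ρ₁.ac
  sat₂ : AC.Sat tp.t₂.m ρ₂.ac

/-- Parallel independence for transformations via rules with ACs. -/
def RParallelIndep (ρ₁ ρ₂ : Rule) (tp : TrafoPair ρ₁.p ρ₂.p) : Prop :=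
  (∃ d₁₂ : ρ₁.p.L ⟶ tp.t₂.D, d₁₂ ≫ tp.t₂.k = tp.t₁.m ∧
      AC.Sat (d₁₂ ≫ tp.t₂.c) ρ₁.ac) ∧
  (∃ d₂₁ : ρ₂.p.L ⟶ tp.t₁.D, d₂₁ ≫ tp.t₁.k = tp.t₂.m ∧
      AC.Sat (d₂₁ ≫ tp.t₁.c) ρ₂.ac)

/-- All graphs occurring in a transformation pair are finite. -/
def RTrafoPairFin {ρ₁ ρ₂ : Rule} (t : RTrafoPair ρ₁ ρ₂) : Prop :=
  t.tp.H₁.Fin ∧ t.tp.G.Fin ∧ t.tp.H₂.Fin ∧ t.tp.t₁.D.Fin ∧ t.tp.t₂.D.Fin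

/-! ## Construction of the counterexample rules -/

section Counterexample

open MGraphHom

/-- The empty graph. -/
abbrev Emp : MGraph := ⟨Empty, Empty, Empty.elim, Empty.elim⟩

/-- A single vertex. -/
abbrev Pt : MGraph := ⟨Unit, Empty, Empty.elim, Empty.elim⟩

/-- Two vertices, no edges. -/
abbrev TwoPt : MGraph := ⟨Bool, Empty, Empty.elim, Empty.elim⟩

/-- A single edge `false ⟶ true`. -/
abbrev EdgeG : MGraph := ⟨Bool, Unit, fun _ => false, fun _ => true⟩

/-- A single loop. -/
abbrev LoopG : MGraph := ⟨Unit, Unit, fun _ => (), fun _ => ()⟩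

/-- An edge into the designated vertex `false`. -/
abbrev EdgeInG : MGraph := ⟨Bool, Unit, fun _ => true, fun _ => false⟩

/-- An edge out of the designated vertex `false`. -/
abbrev EdgeOutG : MGraph := ⟨Bool, Unit, fun _ => false, fun _ => true⟩

/-- Two edges with distinct sources and a common target `0`. -/
abbrev P1G : MGraph := ⟨Fin 3, Bool, fun b => if b then 2 else 1, fun _ => 0⟩

/-- Two parallel edges `true ⟶ false`. -/
abbrev P2G : MGraph := ⟨Bool, Bool, fun _ => true, fun _ => false⟩

/-- The infinite chain `0 ⟶ 1 ⟶ 2 ⟶ ⋯`. -/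
abbrev NatG : MGraph := ⟨ℕ, ℕ, id, Nat.succ⟩

/-- The infinite chain with its first edge removed. -/
abbrev DG : MGraph := ⟨ℕ, ℕ, Nat.succ, fun n => n + 2⟩

/-- The unique morphism from the empty graph. -/
def emptyTo (G : MGraph) : Emp ⟶ G :=
  ⟨Empty.elim, Empty.elim, fun e => e.elim, fun e => e.elim⟩

lemma emp_hom_ext {G : MGraph} (f g : Emp ⟶ G) : f = g :=
  MGraph.hom_ext' (funext fun x => x.elim) (funext fun x => x.elim)

/-- Inclusion of the point into the loop. -/
def ptToLoop : Pt ⟶ LoopG := ⟨fun _ => (), Empty.elim, fun e => e.elim, fun e => e.elim⟩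

def ptToEdgeIn : Pt ⟶ EdgeInG := ⟨fun _ => false, Empty.elim, fun e => e.elim, fun e => e.elim⟩

def ptToEdgeOut : Pt ⟶ EdgeOutG := ⟨fun _ => false, Empty.elim, fun e => e.elim, fun e => e.elim⟩

lemma injHom_of_pt {G : MGraph} (q : Pt ⟶ G) : InjHom q :=
  ⟨fun a b _ => Subsingleton.elim a b, fun a => a.elim⟩

/-- "There are no loops". -/
def Cnoloop : AC Emp := AC.neg (AC.ex (emptyTo LoopG) (AC.tru LoopG))

/-- "There is a vertex with no incoming edge". -/
def Csource : AC Emp := AC.ex (emptyTo Pt) (AC.neg (AC.ex ptToEdgeIn (AC.tru EdgeInG)))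

/-- "Every vertex has an outgoing edge" (given no loops). -/
def Cout : AC Emp :=
  AC.neg (AC.ex (emptyTo Pt) (AC.neg (AC.ex ptToEdgeOut (AC.tru EdgeOutG))))

def Ctinj1 : AC Emp := AC.neg (AC.ex (emptyTo P1G) (AC.tru P1G))

def Ctinj2 : AC Emp := AC.neg (AC.ex (emptyTo P2G) (AC.tru P2G))

/-- The application condition forcing infiniteness. -/
def ac₁ : AC Emp :=
  AC.conj (AC.conj Cnoloop Csource) (AC.conj Cout (AC.conj Ctinj1 Ctinj2))

end Counterexample
section Counterexample2

open MGraphHom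

lemma fin3_inj {α : Type _} {x y z : α} (h1 : x ≠ y) (h2 : x ≠ z) (h3 : y ≠ z) :
    Function.Injective ![x, y, z] := by
  intro a b hab
  fin_cases a <;> fin_cases b <;> simp_all

lemma bool_inj {α : Type _} {x y : α} (h : x ≠ y) :
    Function.Injective (fun b : Bool => if b then x else y) := by
  intro a b hab
  cases a <;> cases b <;> simp_all

lemma injHom_unit_unit {G : MGraph} (q : LoopG ⟶ G) : InjHom q :=
  ⟨fun a b _ => Subsingleton.elim a b, fun a b _ => Subsingleton.elim a b⟩

/-- From `Cnoloop`: the graph has no loops. -/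
lemma sat_noloop {G : MGraph} {p : Emp ⟶ G} (h : AC.Sat p Cnoloop) :
    ∀ f : G.E, G.s f ≠ G.t f := by
  intro f hf
  exact h ⟨⟨fun _ => G.s f, fun _ => f, fun _ => rfl, fun _ => hf.symm⟩,
    injHom_unit_unit _, emp_hom_ext _ _, trivial⟩

/-- From `Csource` (plus no loops): some vertex has no incoming edge. -/
lemma sat_source {G : MGraph} {p : Emp ⟶ G} (h : AC.Sat p Csource)
    (hnl : ∀ f : G.E, G.s f ≠ G.t f) : ∃ v₀ : G.V, ∀ f : G.E, G.t f ≠ v₀ := by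
  obtain ⟨q, -, -, hni⟩ := h
  refine ⟨q.onV (), fun f hf => hni ?_⟩
  refine ⟨⟨fun b => if b then G.s f else G.t f, fun _ => f, fun e => rfl, fun e => rfl⟩,
    ⟨bool_inj (fun hc => hnl f hc), fun a b _ => Subsingleton.elim a b⟩, ?_, trivial⟩
  apply MGraph.hom_ext'
  · funext u; exact hf
  · funext e; exact e.elim

/-- From `Cout`: every vertex has an outgoing edge. -/
lemma sat_out {G : MGraph} {p : Emp ⟶ G} (h : AC.Sat p Cout) :
    ∀ v : G.V, ∃ f : G.E, G.s f = v := by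
  intro v
  by_contra hno
  push_neg at hno
  refine h ⟨⟨fun _ => v, fun e => e.elim, fun e => e.elim, fun e => e.elim⟩,
    injHom_of_pt _, emp_hom_ext _ _, ?_⟩
  rintro ⟨q', -, hext, -⟩
  refine hno (q'.onE ()) ?_
  have h1 : G.s (q'.onE ()) = q'.onV false := q'.comm_s ()
  have h2 : q'.onV false = v := congrFun (congrArg MGraphHom.onV hext) ()
  rw [h1, h2]

/-- From the two `Ctinj` conditions (plus no loops): the target map is injective. -/
lemma sat_tinj {G : MGraph} {p : Emp ⟶ G} (h1 : AC.Sat p Ctinj1) (h2 : AC.Sat p Ctinj2)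
    (hnl : ∀ f : G.E, G.s f ≠ G.t f) : Function.Injective G.t := by
  intro f g hfg
  by_contra hne
  by_cases hs : G.s f = G.s g
  · refine h2 ⟨⟨fun b => if b then G.s f else G.t f, fun b => if b then g else f,
      ?_, ?_⟩, ⟨bool_inj (fun hc => hnl f hc), bool_inj (fun hc => hne hc.symm)⟩,
      emp_hom_ext _ _, trivial⟩
    · intro e; cases e <;> simp [P2G, hs]
    · intro e; cases e <;> simp [P2G, hfg]
  · have hft2 : G.t f ≠ G.s f := fun hc => hnl f hc.symm
    have hgt : G.s g ≠ G.t f := by rw [hfg]; exact hnl g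
    refine h1 ⟨⟨![G.t f, G.s f, G.s g], fun b => if b then g else f, ?_, ?_⟩,
      ⟨fin3_inj hft2 (Ne.symm hgt) hs, bool_inj (fun hc => hne hc.symm)⟩,
      emp_hom_ext _ _, trivial⟩
    · intro e; cases e <;> simp [P1G]
    · intro e; cases e <;> simp [P1G, hfg]
/-- No match from the empty graph into a finite graph satisfies `ac₁`. -/
lemma finContra {G : MGraph} (hfin : G.Fin) (p : Emp ⟶ G) (h : AC.Sat p ac₁) : False := by
  obtain ⟨⟨hnl', hsrc⟩, hout, h1, h2⟩ := h
  have hnl := sat_noloop hnl'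
  obtain ⟨v₀, hv₀⟩ := sat_source hsrc hnl
  have hsurj : Function.Surjective G.s := sat_out hout
  have htinj := sat_tinj h1 h2 hnl
  have hV : Finite G.V := hfin.1
  have hE : Finite G.E := hfin.2
  have hinj : Function.Injective (Sum.elim G.t (fun _ : Unit => v₀)) := by
    rintro (a | a) (b | b) hab
    · rw [htinj hab]
    · exact absurd hab (hv₀ a)
    · exact absurd hab.symm (hv₀ b)
    · rfl
  have k1 := Nat.card_le_card_of_injective _ hinj
  rw [Nat.card_sum] at k1
  have hu : Nat.card Unit = 1 := Nat.card_unique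
  have k2 : Nat.card G.V ≤ Nat.card G.E := Nat.card_le_card_of_surjective G.s hsurj
  omega

/-- The infinite chain satisfies `ac₁`. -/
lemma natSat : AC.Sat (emptyTo NatG) ac₁ := by
  refine ⟨⟨?_, ?_⟩, ?_, ?_, ?_⟩
  · rintro ⟨q, -, -, -⟩
    have h1 : (q.onE () : ℕ) = (q.onV () : ℕ) := q.comm_s ()
    have h2 : (q.onE () : ℕ) + 1 = (q.onV () : ℕ) := q.comm_t ()
    exact absurd (h2.trans h1.symm) (Nat.succ_ne_self _)
  · refine ⟨⟨fun _ => 0, fun e => e.elim, fun e => e.elim, fun e => e.elim⟩,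
      injHom_of_pt _, emp_hom_ext _ _, ?_⟩
    rintro ⟨q', -, hext, -⟩
    have h1 : (q'.onE () : ℕ) + 1 = (q'.onV false : ℕ) := q'.comm_t ()
    have h2 : (q'.onV false : ℕ) = 0 := congrFun (congrArg MGraphHom.onV hext) ()
    exact absurd (h1.trans h2) (Nat.succ_ne_zero _)
  · rintro ⟨q, -, -, hneg⟩
    refine hneg ⟨⟨fun b => if b then q.onV () + 1 else q.onV (), fun _ => q.onV (),
      fun e => rfl, fun e => rfl⟩,
      ⟨bool_inj (Nat.succ_ne_self _), fun a b _ => Subsingleton.elim a b⟩, ?_, trivial⟩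
    apply MGraph.hom_ext'
    · funext u; rfl
    · funext e; exact e.elim
  · rintro ⟨q, ⟨-, einj⟩, -, -⟩
    have h1 : (q.onE false : ℕ) + 1 = (q.onV 0 : ℕ) := q.comm_t false
    have h2 : (q.onE true : ℕ) + 1 = (q.onV 0 : ℕ) := q.comm_t true
    have h3 : (q.onE false : ℕ) = (q.onE true : ℕ) :=
      Nat.succ_injective (h1.trans h2.symm)
    simpa using einj h3
  · rintro ⟨q, ⟨-, einj⟩, -, -⟩
    have h1 : (q.onE false : ℕ) + 1 = (q.onV false : ℕ) := q.comm_t false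
    have h2 : (q.onE true : ℕ) + 1 = (q.onV false : ℕ) := q.comm_t true
    have h3 : (q.onE false : ℕ) = (q.onE true : ℕ) :=
      Nat.succ_injective (h1.trans h2.symm)
    simpa using einj h3

/-- No match from the empty graph into the broken chain `DG` satisfies `ac₁`
(vertex `0` has no outgoing edge). -/
lemma dgNoSat (p : Emp ⟶ DG) (h : AC.Sat p ac₁) : False := by
  obtain ⟨-, hout, -⟩ := h
  refine hout ⟨⟨fun _ => 0, fun e => e.elim, fun e => e.elim, fun e => e.elim⟩,
    injHom_of_pt _, emp_hom_ext _ _, ?_⟩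
  rintro ⟨q', -, hext, -⟩
  have h1 : (q'.onE () : ℕ) + 1 = (q'.onV false : ℕ) := q'.comm_s ()
  have h2 : (q'.onV false : ℕ) = 0 := congrFun (congrArg MGraphHom.onV hext) ()
  exact absurd (h1.trans h2) (Nat.succ_ne_zero _)

end Counterexample2
section Counterexample3

open MGraphHom

/-- Pushout of the identity: the square `𝟙, f / f, 𝟙` is a pushout. -/
lemma isPushout_id_mgraph {A B : MGraph} (f : A ⟶ B) : IsPushout (𝟙 A) f f (𝟙 B) :=
  IsPushout.of_horiz_isIso ⟨by simp⟩

/-- The first rule: identity rule on the empty graph, with AC `ac₁`. -/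
abbrev rho₁ : Rule :=
  ⟨⟨Emp, Emp, Emp, 𝟙 Emp, 𝟙 Emp, inferInstance, inferInstance⟩, ac₁⟩

/-- Inclusion of the two endpoints into the single edge. -/
def inclTwoPt : TwoPt ⟶ EdgeG :=
  ⟨fun b => b, fun e => e.elim, fun e => e.elim, fun e => e.elim⟩

lemma mono_inclTwoPt : Mono inclTwoPt := by
  refine ⟨fun {Z} u v h => MGraph.hom_ext' ?_ ?_⟩
  · funext w; exact congrFun (congrArg MGraphHom.onV h) w
  · funext e; exact (u.onE e).elim

/-- The second rule: delete an edge (keeping its endpoints), no AC. -/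
abbrev rho₂ : Rule :=
  ⟨⟨EdgeG, TwoPt, TwoPt, inclTwoPt, 𝟙 TwoPt, mono_inclTwoPt, inferInstance⟩, AC.tru EdgeG⟩

/-- The match of the edge rule at the first edge of the chain. -/
def m₂ : EdgeG ⟶ NatG :=
  ⟨fun b => if b then 1 else 0, fun _ => 0, fun e => rfl, fun e => rfl⟩

/-- The two endpoints `0`, `1` inside `DG`. -/
def f₂ : TwoPt ⟶ DG :=
  ⟨fun b => if b then 1 else 0, fun e => e.elim, fun e => e.elim, fun e => e.elim⟩

/-- The inclusion of the broken chain into the chain (edge `n ↦ n+1`). -/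
def k₂ : DG ⟶ NatG :=
  ⟨fun v => v, Nat.succ, fun e => rfl, fun e => rfl⟩

lemma po_main : IsPushout inclTwoPt f₂ m₂ k₂ := by
  have w : CommSq inclTwoPt f₂ m₂ k₂ := by
    constructor
    apply MGraph.hom_ext'
    · funext b; cases b <;> rfl
    · funext e; exact e.elim
  refine IsPushout.of_isColimit' w ?_
  have cond : ∀ (s : PushoutCocone inclTwoPt f₂) (b : Bool),
      s.inl.onV (inclTwoPt.onV b) = s.inr.onV (f₂.onV b) :=
    fun s b => congrFun (congrArg MGraphHom.onV s.condition) b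
  refine PushoutCocone.IsColimit.mk w.w
    (fun s => ⟨fun v => s.inr.onV v,
      fun e => match e with | 0 => s.inl.onE () | (n+1) => s.inr.onE n, ?_, ?_⟩)
    (fun s => ?_) (fun s => ?_) (fun s mm h1 h2 => ?_)
  · intro e
    match e with
    | 0 =>
      have h1 : s.pt.s (s.inl.onE ()) = s.inl.onV false := s.inl.comm_s ()
      have h2 := cond s false
      exact h1.trans h2
    | (n+1) => exact s.inr.comm_s n
  · intro e
    match e with
    | 0 =>
      have h1 : s.pt.t (s.inl.onE ()) = s.inl.onV true := s.inl.comm_t ()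
      have h2 := cond s true
      exact h1.trans h2
    | (n+1) => exact s.inr.comm_t n
  · apply MGraph.hom_ext'
    · funext b; cases b
      · exact (cond s false).symm
      · exact (cond s true).symm
    · funext e; rfl
  · apply MGraph.hom_ext'
    · funext v; rfl
    · funext e; rfl
  · apply MGraph.hom_ext'
    · funext v
      exact congrFun (congrArg MGraphHom.onV h2) v
    · funext e
      match e with
      | 0 => exact congrFun (congrArg MGraphHom.onE h1) ()
      | (n+1) => exact congrFun (congrArg MGraphHom.onE h2) n

/-- The conflicting transformation pair on the infinite chain. -/
def tpG : RTrafoPair rho₁ rho₂ where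
  tp :=
    { H₁ := NatG
      G := NatG
      H₂ := DG
      t₁ :=
        { m := emptyTo NatG
          D := NatG
          f := emptyTo NatG
          k := 𝟙 NatG
          c := 𝟙 NatG
          cm := emptyTo NatG
          po1 := isPushout_id_mgraph _
          po2 := isPushout_id_mgraph _ }
      t₂ :=
        { m := m₂
          D := DG
          f := f₂
          k := k₂
          c := 𝟙 DG
          cm := f₂
          po1 := po_main
          po2 := isPushout_id_mgraph _ } }
  sat₁ := natSat
  sat₂ := trivial

lemma tpG_conflict : ¬ RParallelIndep rho₁ rho₂ tpG.tp := by
  rintro ⟨⟨d, -, hsat⟩, -⟩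
  exact dgNoSat _ hsat

lemma emp_fin : Emp.Fin := ⟨inferInstance, inferInstance⟩

lemma ruleFin₁ : RuleFin rho₁ := by
  refine ⟨emp_fin, emp_fin, emp_fin, ?_⟩
  exact ⟨⟨⟨⟨inferInstance, inferInstance⟩, trivial⟩,
      ⟨inferInstance, inferInstance⟩, ⟨inferInstance, inferInstance⟩, trivial⟩,
    ⟨⟨inferInstance, inferInstance⟩, ⟨inferInstance, inferInstance⟩, trivial⟩,
    ⟨⟨inferInstance, inferInstance⟩, trivial⟩, ⟨⟨inferInstance, inferInstance⟩, trivial⟩⟩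

lemma ruleFin₂ : RuleFin rho₂ :=
  ⟨⟨inferInstance, inferInstance⟩, ⟨inferInstance, inferInstance⟩,
    ⟨inferInstance, inferInstance⟩, trivial⟩

end Counterexample3

/-- In the category of directed multigraphs there exist finite rules with ACs such that
no finite set of transformation pairs consisting of finite graphs is complete with
respect to parallel dependence. -/
theorem exists_rules_without_finite_complete_set_of_conflicts :
    ∃ ρ₁ ρ₂ : Rule, RuleFin ρ₁ ∧ RuleFin ρ₂ ∧
      ¬ ∃ S : Set (RTrafoPair ρ₁ ρ₂), S.Finite ∧ (∀ t ∈ S, RTrafoPairFin t) ∧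
          ∀ tpG : RTrafoPair ρ₁ ρ₂, ¬ RParallelIndep ρ₁ ρ₂ tpG.tp →
            ∃ tS ∈ S, ∃ m : tS.tp.G ⟶ tpG.tp.G,
              Nonempty (PairEmbedding tS.tp tpG.tp m) := by
  refine ⟨rho₁, rho₂, ruleFin₁, ruleFin₂, ?_⟩
  rintro ⟨S, -, hfin, hcomp⟩
  obtain ⟨tS, hmem, -⟩ := hcomp tpG tpG_conflict
  exact finContra (hfin tS hmem).2.1 _ tS.sat₁
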